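/- Let d ≥ 2, ε ∈ (0,1], and let p, q be probability vectors in Δ_d with (1/2)‖p − q‖₁ ≤ ε and H(p) ≥ H(q). Then H(p) − H(q) ≤ ε log₂(d−1) + h(ε) if ε < 1 − 1/d, and H(p) − H(q) ≤ log₂ d if ε ≥ 1 − 1/d. Moreover, equality occurs if and only if there is a permutation π of {1,…,d} such that π(q) = (1,0,…,0) and either (1) ε < 1 − 1/d and π(p) = (1−ε, ε/(d−1), …, ε/(d−1)), or (2) ε ≥ 1 − 1/d and p = (1/d, …, 1/d). -/

import Mathlib

open scoped BigOperators

noncomputable section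

/-- The Shannon entropy (base 2) of a vector, with `0 log₂ 0 = 0`. -/
noncomputable def shEnt {d : ℕ} (p : Fin d → ℝ) : ℝ :=
  -∑ i, p i * Real.logb 2 (p i)

/-- The binary entropy `h(ε) = −ε log₂ ε − (1−ε) log₂(1−ε)`. -/
noncomputable def binEnt (ε : ℝ) : ℝ :=
  -(ε * Real.logb 2 ε) - (1 - ε) * Real.logb 2 (1 - ε)

/-- The Audenaert–Fannes bound. -/
noncomputable def AF (d : ℕ) (ε : ℝ) : ℝ :=
  if ε < 1 - 1 / d then ε * Real.logb 2 ((d : ℝ) - 1) + binEnt ε else Real.logb 2 d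

section AFHelpers
open Real

private noncomputable def afG (r : ℝ) (x : ℝ) : ℝ :=
  x * log r + negMulLog x + negMulLog (1 - x)

private lemma af_tangent_le {c a : ℝ} (hc : 0 < c) (ha : 0 ≤ a) :
    negMulLog a ≤ negMulLog c + (-log c - 1) * (a - c) := by
  rcases ha.eq_or_lt with h | h
  · subst h; simp only [negMulLog_zero, negMulLog]
    have : -c * log c + (-log c - 1) * (0 - c) = c := by ring
    linarith
  · have key : log (c / a) ≤ c / a - 1 := Real.log_le_sub_one_of_pos (by positivity)
    have hlog : log (c / a) = log c - log a := Real.log_div hc.ne' h.ne'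
    have h2 : a * (log c - log a) ≤ c - a := by
      rw [← hlog]
      calc a * log (c/a) ≤ a * (c/a - 1) := by nlinarith
        _ = c - a := by field_simp
    simp only [negMulLog]; nlinarith

private lemma af_tangent_lt {c a : ℝ} (hc : 0 < c) (ha : 0 ≤ a) (hne : a ≠ c) :
    negMulLog a < negMulLog c + (-log c - 1) * (a - c) := by
  rcases ha.eq_or_lt with h | h
  · subst h; simp only [negMulLog_zero, negMulLog]
    have : -c * log c + (-log c - 1) * (0 - c) = c := by ring
    linarith
  · have key : log (c / a) < c / a - 1 :=
      Real.log_lt_sub_one_of_pos (by positivity) (by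
        intro hcon
        apply hne
        field_simp at hcon
        linarith)
    have hlog : log (c / a) = log c - log a := Real.log_div hc.ne' h.ne'
    have h2 : a * (log c - log a) < c - a := by
      rw [← hlog]
      calc a * log (c/a) < a * (c/a - 1) := by nlinarith
        _ = c - a := by field_simp
    simp only [negMulLog]; nlinarith

private lemma af_subadd_lt {x y : ℝ} (hx : 0 < x) (hy : 0 < y) :
    negMulLog (x + y) < negMulLog x + negMulLog y := by
  have h1 : log x < log (x + y) := Real.log_lt_log hx (by linarith)
  have h2 : log y < log (x + y) := Real.log_lt_log hy (by linarith)
  simp only [negMulLog]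
  nlinarith

private lemma af_subadd_le {x y : ℝ} (hx : 0 ≤ x) (hy : 0 ≤ y) :
    negMulLog (x + y) ≤ negMulLog x + negMulLog y := by
  rcases hx.eq_or_lt with h | h
  · simp [← h]
  rcases hy.eq_or_lt with h' | h'
  · simp [← h']
  · exact (af_subadd_lt h h').le

private lemma af_maxEnt {d : ℕ} (hd : 0 < d) (p : Fin d → ℝ) (h0 : ∀ i, 0 ≤ p i)
    (h1 : ∑ i, p i = 1) :
    ∑ i, negMulLog (p i) ≤ log d ∧
      (∑ i, negMulLog (p i) = log d → ∀ i, p i = 1 / d) := by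
  have hdpos : (0 : ℝ) < d := Nat.cast_pos.mpr hd
  have hc : (0 : ℝ) < 1 / d := by positivity
  have hbound : ∀ i, negMulLog (p i) ≤ negMulLog (1/d) + (-log (1/d) - 1) * (p i - 1/d) :=
    fun i => af_tangent_le hc (h0 i)
  have hsum : ∑ i, (negMulLog (1/d) + (-log (1/d) - 1) * (p i - 1/d)) = log d := by
    rw [Finset.sum_add_distrib, ← Finset.mul_sum, Finset.sum_const, Finset.card_univ,
      Fintype.card_fin]
    have hs : ∑ i, (p i - 1/d) = 0 := by
      rw [Finset.sum_sub_distrib, h1, Finset.sum_const, Finset.card_univ, Fintype.card_fin]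
      rw [nsmul_eq_mul, mul_one_div_cancel hdpos.ne', sub_self]
    rw [hs, mul_zero, add_zero]
    simp only [negMulLog, one_div, Real.log_inv]
    rw [nsmul_eq_mul]; field_simp
  constructor
  · calc ∑ i, negMulLog (p i) ≤ ∑ i, (negMulLog (1/d) + (-log (1/d) - 1) * (p i - 1/d)) :=
        Finset.sum_le_sum fun i _ => hbound i
      _ = log d := hsum
  · intro heq
    by_contra hcon
    push_neg at hcon
    obtain ⟨i₀, hi₀⟩ := hcon
    have hlt : ∑ i, negMulLog (p i) < ∑ i, (negMulLog (1/d) + (-log (1/d) - 1) * (p i - 1/d)) :=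
      Finset.sum_lt_sum (fun i _ => hbound i)
        ⟨i₀, Finset.mem_univ _, af_tangent_lt hc (h0 i₀) hi₀⟩
    rw [hsum] at hlt
    linarith [heq]

private lemma af_minEnt {d : ℕ} (q : Fin d → ℝ) (h0 : ∀ i, 0 ≤ q i) (hle : ∀ i, q i ≤ 1) :
    0 ≤ ∑ i, negMulLog (q i) :=
  Finset.sum_nonneg fun i _ => negMulLog_nonneg (h0 i) (hle i)

private lemma af_minEnt_eq {d : ℕ} (q : Fin d → ℝ) (h0 : ∀ i, 0 ≤ q i) (hle : ∀ i, q i ≤ 1)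
    (h1 : ∑ i, q i = 1) (heq : ∑ i, negMulLog (q i) = 0) :
    ∃ j, ∀ i, q i = if i = j then 1 else 0 := by
  have hterm : ∀ i ∈ Finset.univ, negMulLog (q i) = 0 :=
    (Finset.sum_eq_zero_iff_of_nonneg
      (fun i _ => negMulLog_nonneg (h0 i) (hle i))).mp heq
  have h01 : ∀ i, q i = 0 ∨ q i = 1 := by
    intro i
    have := hterm i (Finset.mem_univ i)
    simp only [negMulLog, neg_mul, neg_eq_zero, mul_eq_zero] at this
    rcases this with h | h
    · exact Or.inl h
    · rcases Real.log_eq_zero.mp h with h | h | h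
      · exact Or.inl h
      · exact Or.inr h
      · exfalso; linarith [h0 i]
  have hex : ∃ j, q j ≠ 0 := by
    by_contra hcon
    push_neg at hcon
    rw [Finset.sum_eq_zero (fun i _ => hcon i)] at h1
    norm_num at h1
  obtain ⟨j, hj⟩ := hex
  have hqj : q j = 1 := (h01 j).resolve_left hj
  refine ⟨j, fun i => ?_⟩
  by_cases hij : i = j
  · simp [hij, hqj]
  · simp only [hij, if_false]
    rcases h01 i with h | h
    · exact h
    · exfalso
      have hsub : ({i, j} : Finset (Fin d)) ⊆ Finset.univ := Finset.subset_univ _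
      have hsum : ∑ k ∈ ({i, j} : Finset (Fin d)), q k ≤ ∑ k, q k :=
        Finset.sum_le_sum_of_subset_of_nonneg hsub (fun k _ _ => h0 k)
      rw [Finset.sum_pair hij, h1, h, hqj] at hsum
      linarith

private lemma af_G_mono {r : ℝ} (hr : 1 ≤ r) :
    StrictMonoOn (afG r) (Set.Icc 0 (r / (r + 1))) := by
  have hrpos : (0 : ℝ) < r := by linarith
  have hcont : Continuous (afG r) := by
    unfold afG
    fun_prop
  apply strictMonoOn_of_deriv_pos (convex_Icc _ _) hcont.continuousOn
  intro x hx
  rw [interior_Icc] at hx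
  obtain ⟨hx0, hx1⟩ := hx
  have h1x : 0 < 1 - x := by
    have : r / (r + 1) < 1 := by
      rw [div_lt_one (by linarith)]
      linarith
    linarith
  have hD : HasDerivAt (afG r) (log r + (-log x - 1) + (-log (1 - x) - 1) * (-1)) x := by
    have d1 : HasDerivAt (fun y : ℝ => y * log r) (log r) x := by
      simpa using (hasDerivAt_id x).mul_const (log r)
    have d2 : HasDerivAt negMulLog (-log x - 1) x := hasDerivAt_negMulLog hx0.ne'
    have d3 : HasDerivAt (fun y : ℝ => negMulLog (1 - y)) ((-log (1 - x) - 1) * (-1)) x := by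
      have inner : HasDerivAt (fun y : ℝ => 1 - y) (-1) x := by
        exact (hasDerivAt_id' x).const_sub (1:ℝ)
      exact (hasDerivAt_negMulLog h1x.ne').comp x inner
    exact (d1.add d2).add d3
  rw [hD.deriv]
  have hxr : x < r * (1 - x) := by
    have := (lt_div_iff₀ (show (0:ℝ) < r + 1 by linarith)).mp hx1
    nlinarith
  have hlog : log x < log (r * (1 - x)) := Real.log_lt_log hx0 hxr
  rw [Real.log_mul hrpos.ne' h1x.ne'] at hlog
  linarith

private lemma af_Bterm {m q M : ℝ} (hm : 0 ≤ m) (hmq : m ≤ q) (hq1 : q ≤ 1) (hM : 0 < M) :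
    negMulLog m - negMulLog q ≤ -m * log M + q * M - m := by
  rcases hm.eq_or_lt with h | h
  · have hq0 : 0 ≤ q := le_trans hm hmq
    have h1 : 0 ≤ negMulLog q := negMulLog_nonneg hq0 hq1
    rw [← h]
    simp only [negMulLog_zero]
    nlinarith
  · have hq0 : 0 < q := lt_of_lt_of_le h hmq
    have hlogq : log q ≤ 0 := Real.log_nonpos hq0.le hq1
    have step1 : negMulLog m - negMulLog q ≤ m * (log q - log m) := by
      simp only [negMulLog]
      nlinarith [mul_nonpos_of_nonneg_of_nonpos (by linarith : (0:ℝ) ≤ q - m) hlogq]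
    have hx : (0:ℝ) < q * M / m := by positivity
    have key : log (q * M / m) ≤ q * M / m - 1 := Real.log_le_sub_one_of_pos hx
    have hlog : log (q * M / m) = log q + log M - log m := by
      rw [Real.log_div (by positivity) h.ne', Real.log_mul hq0.ne' hM.ne']
    have step2 : m * (log q - log m) ≤ -m * log M + q * M - m := by
      have h2 : m * log (q * M / m) ≤ m * (q * M / m - 1) := by nlinarith
      have h3 : m * (q * M / m - 1) = q * M - m := by field_simp
      rw [hlog] at h2
      nlinarith
    linarith

private lemma af_shEnt {d : ℕ} (p : Fin d → ℝ) :
    shEnt p = (∑ i, negMulLog (p i)) / log 2 := by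
  rw [shEnt, Finset.sum_div, ← Finset.sum_neg_distrib]
  refine Finset.sum_congr rfl fun i _ => ?_
  rw [Real.logb, negMulLog]
  ring

private lemma af_Gc {r t : ℝ} (hr : 0 < r) (ht : 0 < t) :
    r * negMulLog (t / r) = t * log r + negMulLog t := by
  have hlog : log (t / r) = log t - log r := Real.log_div ht.ne' hr.ne'
  simp only [negMulLog, hlog]
  field_simp
  ring

private lemma af_sum_if {d : ℕ} (i0 : Fin d) (A B : ℝ) :
    ∑ i, (if i = i0 then A else B) = A + ((d : ℝ) - 1) * B := by
  have h : ∀ i : Fin d, (if i = i0 then A else B) = (if i = i0 then A - B else 0) + B := by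
    intro i; split_ifs <;> ring
  rw [Finset.sum_congr rfl fun i _ => h i, Finset.sum_add_distrib, Finset.sum_ite_eq'
    Finset.univ i0 (fun _ => A - B), Finset.sum_const, Finset.card_univ, Fintype.card_fin]
  simp only [Finset.mem_univ, if_true, nsmul_eq_mul]
  ring


private lemma af_div_le {a b L : ℝ} (h : a ≤ b) (hL : 0 < L) : a / L ≤ b / L := by
  gcongr

private lemma af_core {d : ℕ} (hd : 2 ≤ d) (p q : Fin d → ℝ)
    (hp0 : ∀ i, 0 ≤ p i) (hp1 : ∑ i, p i = 1)
    (hq0 : ∀ i, 0 ≤ q i) (hq1 : ∑ i, q i = 1)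
    {t : ℝ} (ht : ∑ i, |p i - q i| = 2 * t) (ht0 : 0 < t) (ht1 : t < 1) :
    ∑ i, negMulLog (p i) - ∑ i, negMulLog (q i) ≤ afG ((d:ℝ) - 1) t ∧
    (∑ i, negMulLog (p i) - ∑ i, negMulLog (q i) = afG ((d:ℝ) - 1) t →
      ∃ j : Fin d, (∀ i, q i = if i = j then 1 else 0) ∧
        (∀ i, p i = if i = j then 1 - t else t / ((d:ℝ) - 1))) := by
  have hd1 : (0:ℝ) < (d:ℝ) - 1 := by
    have : (2:ℝ) ≤ d := by exact_mod_cast hd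
    linarith
  set m : Fin d → ℝ := fun i => min (p i) (q i) with hm_def
  set a : Fin d → ℝ := fun i => p i - m i with ha_def
  set b : Fin d → ℝ := fun i => q i - m i with hb_def
  have hm0 : ∀ i, 0 ≤ m i := fun i => le_min (hp0 i) (hq0 i)
  have ha0 : ∀ i, 0 ≤ a i := fun i => by simp [ha_def, hm_def]
  have hb0 : ∀ i, 0 ≤ b i := fun i => by simp [hb_def, hm_def]
  have habs : ∀ i, |p i - q i| = a i + b i := by
    intro i
    rcases le_total (p i) (q i) with h | h
    · rw [abs_of_nonpos (by linarith)]
      simp [ha_def, hb_def, hm_def, min_eq_left h]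
    · rw [abs_of_nonneg (by linarith)]
      simp [ha_def, hb_def, hm_def, min_eq_right h]
  have hab : ∀ i, a i = 0 ∨ b i = 0 := by
    intro i
    rcases le_total (p i) (q i) with h | h
    · exact Or.inl (by simp [ha_def, hm_def, min_eq_left h])
    · exact Or.inr (by simp [hb_def, hm_def, min_eq_right h])
  have hsum_ab : ∑ i, a i + ∑ i, b i = 2 * t := by
    rw [← Finset.sum_add_distrib, ← ht]
    exact (Finset.sum_congr rfl fun i _ => (habs i).symm)
  have hsum_ba : ∑ i, b i - ∑ i, a i = 0 := by
    rw [← Finset.sum_sub_distrib]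
    have : ∀ i, b i - a i = q i - p i := fun i => by simp only [ha_def, hb_def]; ring
    rw [Finset.sum_congr rfl fun i _ => this i, Finset.sum_sub_distrib, hp1, hq1]
    ring
  have hsa : ∑ i, a i = t := by linarith
  have hsb : ∑ i, b i = t := by linarith
  have hsm : ∑ i, m i = 1 - t := by
    have : ∑ i, m i = ∑ i, p i - ∑ i, a i := by
      rw [← Finset.sum_sub_distrib]
      exact Finset.sum_congr rfl fun i _ => by simp [ha_def]
    rw [this, hp1, hsa]
  -- choose j with b j > 0
  have hexj : ∃ j, b j ≠ 0 := by
    by_contra hcon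
    push_neg at hcon
    rw [Finset.sum_eq_zero (fun i _ => hcon i)] at hsb
    linarith
  obtain ⟨j, hj⟩ := hexj
  have hbj : 0 < b j := lt_of_le_of_ne (hb0 j) (Ne.symm hj)
  have haj : a j = 0 := (hab j).resolve_right hj
  set c : ℝ := t / ((d:ℝ) - 1) with hc_def
  have hc : 0 < c := by positivity
  set M : ℝ := 1 - t with hM_def
  have hM : 0 < M := by rw [hM_def]; linarith
  have hq_le1 : ∀ i, q i ≤ 1 := by
    intro i
    have := Finset.single_le_sum (fun k _ => hq0 k) (Finset.mem_univ i)
    linarith [hq1 ▸ this]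
  -- the three error terms
  set e1 : Fin d → ℝ := fun i => negMulLog (m i) + negMulLog (a i) - negMulLog (p i) with he1
  set e2 : Fin d → ℝ := fun i =>
    negMulLog c + (-log c - 1) * (a i - c) - negMulLog (a i) with he2
  set e3 : Fin d → ℝ := fun i =>
    (-(m i) * log M + q i * M - m i) - (negMulLog (m i) - negMulLog (q i)) with he3
  have he1nn : ∀ i, 0 ≤ e1 i := by
    intro i
    have hpi : p i = m i + a i := by simp [ha_def]
    have := af_subadd_le (hm0 i) (ha0 i)
    rw [← hpi] at this
    simp only [he1]; linarith
  have he2nn : ∀ i, 0 ≤ e2 i := by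
    intro i
    have := af_tangent_le hc (ha0 i)
    simp only [he2]; linarith
  have he3nn : ∀ i, 0 ≤ e3 i := by
    intro i
    have hmq : m i ≤ q i := min_le_right _ _
    have := af_Bterm (hm0 i) hmq (hq_le1 i) hM
    simp only [he3]; linarith
  -- sums of error terms
  have hEaj : negMulLog (a j) = 0 := by rw [haj]; exact negMulLog_zero
  have hsum_e1 : ∑ i, e1 i
      = ∑ i, negMulLog (m i) + ∑ i, negMulLog (a i) - ∑ i, negMulLog (p i) := by
    simp only [he1, Finset.sum_sub_distrib, Finset.sum_add_distrib]
  have herase : ∑ i ∈ Finset.univ.erase j, a i = t := by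
    have := Finset.sum_erase_add Finset.univ a (Finset.mem_univ j)
    rw [haj, add_zero] at this
    rw [this, hsa]
  have hcard : (Finset.univ.erase j).card = d - 1 := by
    rw [Finset.card_erase_of_mem (Finset.mem_univ j), Finset.card_univ, Fintype.card_fin]
  have hcardR : ((Finset.univ.erase j).card : ℝ) = (d:ℝ) - 1 := by
    rw [hcard]
    have : 1 ≤ d := by omega
    push_cast [Nat.cast_sub this]
    ring
  have hsum_e2 : ∑ i ∈ Finset.univ.erase j, e2 i
      = ((d:ℝ) - 1) * negMulLog c - ∑ i, negMulLog (a i) := by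
    have hsumEa : ∑ i ∈ Finset.univ.erase j, negMulLog (a i) = ∑ i, negMulLog (a i) := by
      have h := Finset.sum_erase_add Finset.univ (fun i => negMulLog (a i)) (Finset.mem_univ j)
      rw [hEaj, add_zero] at h
      exact h
    have hct : ((d:ℝ) - 1) * c = t := by rw [hc_def]; field_simp
    have hmid : ∑ x ∈ Finset.univ.erase j, (-log c - 1) * (a x - c) = 0 := by
      rw [← Finset.mul_sum, Finset.sum_sub_distrib, herase, Finset.sum_const, nsmul_eq_mul,
        hcardR, hct]
      ring
    simp only [he2]
    rw [Finset.sum_sub_distrib, Finset.sum_add_distrib, Finset.sum_const, nsmul_eq_mul, hcardR,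
      hmid, hsumEa]
    ring
  have hsum_e3 : ∑ i, e3 i
      = negMulLog M - (∑ i, negMulLog (m i) - ∑ i, negMulLog (q i)) := by
    simp only [he3]
    rw [Finset.sum_sub_distrib, Finset.sum_sub_distrib, Finset.sum_sub_distrib,
      Finset.sum_add_distrib]
    have h1 : ∑ i, -m i * log M = -(1 - t) * log M := by
      rw [← Finset.sum_mul]
      congr 1
      have hneg : ∑ i, -m i = -∑ i, m i := by simp
      rw [hneg, hsm, hM_def]
    have h2 : ∑ i, q i * M = M := by
      rw [← Finset.sum_mul, hq1, one_mul]
    rw [h1, h2, hsm]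
    simp only [negMulLog, hM_def]
    ring
  have hGc : ((d:ℝ) - 1) * negMulLog c = t * log ((d:ℝ) - 1) + negMulLog t := by
    have hlogc : log c = log t - log ((d:ℝ) - 1) := Real.log_div ht0.ne' hd1.ne'
    have hcd : ((d:ℝ) - 1) * c = t := by rw [hc_def]; field_simp
    simp only [negMulLog, hlogc]
    linear_combination (-(log t - log ((d:ℝ) - 1))) * hcd
  -- the key identity
  have hkey : ∑ i, e1 i + ∑ i ∈ Finset.univ.erase j, e2 i + ∑ i, e3 i
      = afG ((d:ℝ) - 1) t - (∑ i, negMulLog (p i) - ∑ i, negMulLog (q i)) := by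
    rw [hsum_e1, hsum_e2, hsum_e3, hGc]
    simp only [afG, hM_def]
    ring
  have hnn1 : 0 ≤ ∑ i, e1 i := Finset.sum_nonneg fun i _ => he1nn i
  have hnn2 : 0 ≤ ∑ i ∈ Finset.univ.erase j, e2 i := Finset.sum_nonneg fun i _ => he2nn i
  have hnn3 : 0 ≤ ∑ i, e3 i := Finset.sum_nonneg fun i _ => he3nn i
  constructor
  · linarith
  · intro heq
    rw [heq] at hkey
    have hz1 : ∑ i, e1 i = 0 := by linarith
    have hz2 : ∑ i ∈ Finset.univ.erase j, e2 i = 0 := by linarith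
    have he1z : ∀ i, e1 i = 0 := fun i =>
      (Finset.sum_eq_zero_iff_of_nonneg (fun i _ => he1nn i)).mp hz1 i (Finset.mem_univ i)
    have he2z : ∀ i ∈ Finset.univ.erase j, e2 i = 0 := fun i hi =>
      (Finset.sum_eq_zero_iff_of_nonneg (fun i _ => he2nn i)).mp hz2 i hi
    -- for i ≠ j : a i = c
    have hac : ∀ i, i ≠ j → a i = c := by
      intro i hij
      by_contra hcon
      have := af_tangent_lt hc (ha0 i) hcon
      have h0 := he2z i (Finset.mem_erase.mpr ⟨hij, Finset.mem_univ i⟩)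
      simp only [he2] at h0
      linarith
    -- for i ≠ j : m i = 0
    have hmz : ∀ i, i ≠ j → m i = 0 := by
      intro i hij
      by_contra hcon
      have hmpos : 0 < m i := lt_of_le_of_ne (hm0 i) (Ne.symm hcon)
      have hapos : 0 < a i := by rw [hac i hij]; exact hc
      have := af_subadd_lt hmpos hapos
      have h0 := he1z i
      have hpi : p i = m i + a i := by simp [ha_def]
      simp only [he1] at h0
      rw [hpi] at h0
      linarith
    have hqz : ∀ i, i ≠ j → q i = 0 := by
      intro i hij
      have hbz : b i = 0 := by
        rcases hab i with h | h
        · exfalso; rw [hac i hij] at h; exact hc.ne' h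
        · exact h
      have : q i = m i + b i := by simp [hb_def]
      rw [this, hmz i hij, hbz, add_zero]
    have hpz : ∀ i, i ≠ j → p i = c := by
      intro i hij
      have : p i = m i + a i := by simp [ha_def]
      rw [this, hmz i hij, hac i hij, zero_add]
    have hqj : q j = 1 := by
      have := Finset.sum_erase_add Finset.univ q (Finset.mem_univ j)
      rw [hq1] at this
      have hz : ∑ i ∈ Finset.univ.erase j, q i = 0 :=
        Finset.sum_eq_zero fun i hi => hqz i (Finset.ne_of_mem_erase hi)
      linarith [hz ▸ this]
    have hpj : p j = 1 - t := by
      have hsum := Finset.sum_erase_add Finset.univ p (Finset.mem_univ j)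
      rw [hp1] at hsum
      have hz : ∑ i ∈ Finset.univ.erase j, p i = ((d:ℝ) - 1) * c := by
        rw [Finset.sum_congr rfl fun i hi => hpz i (Finset.ne_of_mem_erase hi),
          Finset.sum_const, nsmul_eq_mul, hcardR]
      have hct : ((d:ℝ) - 1) * c = t := by rw [hc_def]; field_simp
      rw [hz, hct] at hsum
      linarith
    refine ⟨j, fun i => ?_, fun i => ?_⟩
    · by_cases hij : i = j
      · simp [hij, hqj]
      · simp [hij, hqz i hij]
    · by_cases hij : i = j
      · simp [hij, hpj, hM_def]
      · simp [hij, hpz i hij, hc_def]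

end AFHelpers

/-- Classical Audenaert–Fannes inequality with equality conditions. -/
theorem classical_audenaert_fannes
    {d : ℕ} (hd : 2 ≤ d) (ε : ℝ) (hε : ε ∈ Set.Ioc (0 : ℝ) 1) (p q : Fin d → ℝ)
    (hp : (∀ i, 0 ≤ p i) ∧ ∑ i, p i = 1) (hq : (∀ i, 0 ≤ q i) ∧ ∑ i, q i = 1)
    (hdist : (1 / 2 : ℝ) * ∑ i, |p i - q i| ≤ ε) (hH : shEnt q ≤ shEnt p) :
    shEnt p - shEnt q ≤ AF d ε ∧
    (shEnt p - shEnt q = AF d ε ↔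
      ∃ π : Equiv.Perm (Fin d),
        (∀ i : Fin d, q (π i) = if (i : ℕ) = 0 then 1 else 0) ∧
        ((ε < 1 - 1 / d ∧
            ∀ i : Fin d, p (π i) = if (i : ℕ) = 0 then 1 - ε else ε / ((d : ℝ) - 1)) ∨
         (1 - 1 / d ≤ ε ∧ ∀ i : Fin d, p i = 1 / d))) := by
  open Real in
  obtain ⟨hp0, hp1⟩ := hp
  obtain ⟨hq0, hq1⟩ := hq
  obtain ⟨hε0, hε1⟩ := hε
  have hL : (0:ℝ) < log 2 := Real.log_pos (by norm_num)
  have hd2R : (2:ℝ) ≤ (d:ℝ) := by exact_mod_cast hd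
  have hd0R : (0:ℝ) < (d:ℝ) := by linarith
  have hd1R : (0:ℝ) < (d:ℝ) - 1 := by linarith
  have hr1 : (1:ℝ) ≤ (d:ℝ) - 1 := by linarith
  have hrr : ((d:ℝ) - 1) / (((d:ℝ) - 1) + 1) = 1 - 1 / (d:ℝ) := by
    field_simp
    ring
  have hsh : shEnt p - shEnt q
      = (∑ i, Real.negMulLog (p i) - ∑ i, Real.negMulLog (q i)) / log 2 := by
    rw [af_shEnt p, af_shEnt q, div_sub_div_same]
  set t : ℝ := (∑ i, |p i - q i|) / 2 with ht_def
  have ht2 : ∑ i, |p i - q i| = 2 * t := by rw [ht_def]; ring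
  have ht0 : 0 ≤ t := by
    rw [ht_def]
    have : 0 ≤ ∑ i, |p i - q i| := Finset.sum_nonneg fun i _ => abs_nonneg _
    linarith
  have htε : t ≤ ε := by rw [ht_def]; linarith
  have hq_le1 : ∀ i, q i ≤ 1 := by
    intro i
    have h := Finset.single_le_sum (fun k _ => hq0 k) (Finset.mem_univ i)
    rw [hq1] at h
    exact h
  set i0 : Fin d := ⟨0, by omega⟩ with hi0
  have hival : ∀ i : Fin d, i = i0 ↔ (i : ℕ) = 0 := by
    intro i; rw [Fin.ext_iff, hi0]
  have mkperm : ∀ j : Fin d, ∀ f : Fin d → ℝ, ∀ A B : ℝ,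
      (∀ i, f i = if i = j then A else B) →
      ∀ i : Fin d, f (Equiv.swap i0 j i) = if (i : ℕ) = 0 then A else B := by
    intro j f A B hf i
    rw [hf]
    have hswap : Equiv.swap i0 j i = j ↔ i = i0 := by
      constructor
      · intro h
        apply (Equiv.swap i0 j).injective (a₁ := i) (a₂ := i0)
        rw [h, Equiv.swap_apply_left]
      · intro h; rw [h, Equiv.swap_apply_left]
    by_cases h : i = i0
    · rw [if_pos (hswap.mpr h), if_pos ((hival i).mp h)]
    · rw [if_neg (fun hc => h (hswap.mp hc)), if_neg (fun hc => h ((hival i).mpr hc))]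
  by_cases hcase : ε < 1 - 1 / (d:ℝ)
  · -- regime 1
    have hAF : AF d ε = afG ((d:ℝ) - 1) ε / log 2 := by
      rw [AF, if_pos hcase, afG, binEnt]
      simp only [Real.logb, negMulLog]
      field_simp
      ring
    have hmono := af_G_mono hr1
    rw [hrr] at hmono
    have hεmem : ε ∈ Set.Icc 0 (1 - 1 / (d:ℝ)) := ⟨hε0.le, hcase.le⟩
    have htmem : t ∈ Set.Icc 0 (1 - 1 / (d:ℝ)) := ⟨ht0, by linarith⟩
    have h0mem : (0:ℝ) ∈ Set.Icc 0 (1 - 1 / (d:ℝ)) := by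
      refine ⟨le_refl 0, ?_⟩
      have : 0 < 1/(d:ℝ) := by positivity
      have : 1/(d:ℝ) ≤ 1/2 := by
        apply div_le_div_of_nonneg_left <;> linarith
      linarith
    have hG0 : afG ((d:ℝ) - 1) 0 = 0 := by simp [afG]
    have hGεpos : 0 < afG ((d:ℝ) - 1) ε := by
      have h := hmono h0mem hεmem hε0
      rw [hG0] at h
      exact h
    rcases ht0.eq_or_lt with h0t | h0t
    · -- t = 0 : p = q
      have hpq : ∀ i, p i = q i := by
        intro i
        have hz : ∑ i, |p i - q i| = 0 := by rw [ht2, ← h0t]; ring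
        have h1 := (Finset.sum_eq_zero_iff_of_nonneg
          (fun i _ => abs_nonneg (p i - q i))).mp hz i (Finset.mem_univ i)
        have h2 := abs_eq_zero.mp h1
        linarith
      have hSpq : ∑ i, Real.negMulLog (p i) = ∑ i, Real.negMulLog (q i) :=
        Finset.sum_congr rfl fun i _ => by rw [hpq i]
      have hΔ : shEnt p - shEnt q = 0 := by rw [hsh, hSpq]; ring
      constructor
      · rw [hΔ, hAF]
        exact (div_pos hGεpos hL).le
      · constructor
        · intro h
          exfalso
          have h0 : (0:ℝ) = afG ((d:ℝ) - 1) ε / log 2 := by rw [← hΔ, h, hAF]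
          have : afG ((d:ℝ) - 1) ε = 0 := by
            field_simp at h0
            linarith
          linarith
        · rintro ⟨σ, hqδ, hbr⟩
          exfalso
          rcases hbr with ⟨_, hpδ⟩ | ⟨hge, _⟩
          · set i1 : Fin d := ⟨1, by omega⟩ with hi1
            have h1 : p (σ i1) = ε / ((d:ℝ) - 1) := by
              rw [hpδ i1, if_neg (by rw [hi1]; norm_num)]
            have h2 : q (σ i1) = 0 := by
              rw [hqδ i1, if_neg (by rw [hi1]; norm_num)]
            rw [hpq (σ i1), h2] at h1
            have hpos : 0 < ε / ((d:ℝ) - 1) := by positivity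
            rw [← h1] at hpos
            exact lt_irrefl 0 hpos
          · linarith
    · -- 0 < t
      have ht1 : t < 1 := by
        have h1d : 0 < 1/(d:ℝ) := by positivity
        linarith
      obtain ⟨hle, heqc⟩ := af_core hd p q hp0 hp1 hq0 hq1 ht2 h0t ht1
      have hGle : afG ((d:ℝ) - 1) t ≤ afG ((d:ℝ) - 1) ε := by
        rcases htε.eq_or_lt with h | h
        · rw [h]
        · exact (hmono htmem hεmem h).le
      constructor
      · rw [hsh, hAF]
        exact af_div_le (by linarith) hL
      · constructor
        · intro heq
          rw [hsh, hAF] at heq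
          have hSpSq : ∑ i, Real.negMulLog (p i) - ∑ i, Real.negMulLog (q i)
              = afG ((d:ℝ) - 1) ε := by
            field_simp at heq
            linarith
          have hteq : t = ε := by
            by_contra hne
            have hlt : t < ε := lt_of_le_of_ne htε hne
            have hG := hmono htmem hεmem hlt
            linarith
          obtain ⟨j, hqδ, hpδ⟩ := heqc (by rw [hSpSq, hteq])
          rw [hteq] at hpδ
          exact ⟨Equiv.swap i0 j, mkperm j q 1 0 hqδ, Or.inl ⟨hcase,
            mkperm j p (1 - ε) (ε / ((d:ℝ) - 1)) hpδ⟩⟩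
        · rintro ⟨σ, hqδ, hbr⟩
          rcases hbr with ⟨_, hpδ⟩ | ⟨hge, _⟩
          · have hSq0 : ∑ i, Real.negMulLog (q i) = 0 := by
              rw [← Equiv.sum_comp σ (fun i => Real.negMulLog (q i))]
              apply Finset.sum_eq_zero
              intro i _
              rw [hqδ i]
              split_ifs <;> simp
            have hSpv : ∑ i, Real.negMulLog (p i)
                = negMulLog (1 - ε) + ((d:ℝ) - 1) * negMulLog (ε / ((d:ℝ) - 1)) := by
              rw [← Equiv.sum_comp σ (fun i => Real.negMulLog (p i))]
              have hterm : ∀ i : Fin d, Real.negMulLog (p (σ i))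
                  = if i = i0 then negMulLog (1 - ε) else negMulLog (ε / ((d:ℝ) - 1)) := by
                intro i
                rw [hpδ i]
                by_cases h : i = i0
                · rw [if_pos ((hival i).mp h), if_pos h]
                · rw [if_neg (fun hc => h ((hival i).mpr hc)), if_neg h]
              rw [Finset.sum_congr rfl fun i _ => hterm i, af_sum_if]
            have hfin : ∑ i, Real.negMulLog (p i) - ∑ i, Real.negMulLog (q i)
                = afG ((d:ℝ) - 1) ε := by
              rw [hSq0, hSpv, af_Gc hd1R hε0, afG]
              ring
            rw [hsh, hfin, hAF]
          · exfalso; linarith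
  · -- regime 2
    have hAF : AF d ε = log d / log 2 := by
      rw [AF, if_neg hcase, Real.logb]
    obtain ⟨hmax, hmaxeq⟩ := af_maxEnt (show 0 < d by omega) p hp0 hp1
    have hmin := af_minEnt q hq0 hq_le1
    constructor
    · rw [hsh, hAF]
      exact af_div_le (by linarith) hL
    · constructor
      · intro heq
        rw [hsh, hAF] at heq
        have hSpSq : ∑ i, Real.negMulLog (p i) - ∑ i, Real.negMulLog (q i) = log d := by
          field_simp at heq
          linarith
        have hSpmax : ∑ i, Real.negMulLog (p i) = log d := by linarith
        have hSq0 : ∑ i, Real.negMulLog (q i) = 0 := by linarith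
        obtain ⟨j, hqδ⟩ := af_minEnt_eq q hq0 hq_le1 hq1 hSq0
        exact ⟨Equiv.swap i0 j, mkperm j q 1 0 hqδ, Or.inr ⟨not_lt.mp hcase, hmaxeq hSpmax⟩⟩
      · rintro ⟨σ, hqδ, hbr⟩
        rcases hbr with ⟨hlt, _⟩ | ⟨_, hpu⟩
        · exact absurd hlt hcase
        · have hSq0 : ∑ i, Real.negMulLog (q i) = 0 := by
            rw [← Equiv.sum_comp σ (fun i => Real.negMulLog (q i))]
            apply Finset.sum_eq_zero
            intro i _
            rw [hqδ i]
            split_ifs <;> simp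
          have hSpv : ∑ i, Real.negMulLog (p i) = log d := by
            rw [Finset.sum_congr rfl fun i _ => by rw [hpu i],
              Finset.sum_const, Finset.card_univ, Fintype.card_fin, nsmul_eq_mul,
              negMulLog, one_div, Real.log_inv]
            field_simp
          rw [hsh, hSpv, hSq0, hAF]
          ring_nf
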